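/- Let n ≥ 2 and let a, b be integers with 0 ≤ b ≤ n-1, -2 ≤ 2a, and 2a < b²/(2(n-1)). Then 2a - b²/(2(n-1)) = -(n+3)/2 if and only if a = -1 and b = n-1. -/

import Mathlib

theorem stmt_6 (n a b : ℤ) (hn : 2 ≤ n) (hb0 : 0 ≤ b) (hb : b ≤ n - 1)
    (ha : -2 ≤ 2 * a) (hab : (2 * a : ℚ) < (b : ℚ) ^ 2 / (2 * (n - 1))) :
    (2 * a : ℚ) - (b : ℚ) ^ 2 / (2 * (n - 1)) = -((n : ℚ) + 3) / 2 ↔ a = -1 ∧ b = n - 1 := by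
  have hnq : (2:ℚ) ≤ (n:ℚ) := by exact_mod_cast hn
  have hpos : (0:ℚ) < 2 * ((n:ℚ) - 1) := by linarith
  have hne : (2:ℚ) * ((n:ℚ) - 1) ≠ 0 := ne_of_gt hpos
  constructor
  · intro h
    have key : (b:ℚ)^2 = 4*(a:ℚ)*((n:ℚ)-1) + ((n:ℚ)+3)*((n:ℚ)-1) := by
      have hne1 : (n:ℚ) - 1 ≠ 0 := by intro h'; linarith
      field_simp at h
      nlinarith [h]
    have keyZ : (b:ℤ)^2 = 4*a*(n-1) + (n+3)*(n-1) := by exact_mod_cast key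
    have hbe : b = n - 1 := by nlinarith
    have hae : a = -1 := by
      subst hbe
      have hn1 : (0:ℤ) < n - 1 := by omega
      nlinarith
    exact ⟨hae, hbe⟩
  · rintro ⟨rfl, rfl⟩
    push_cast
    field_simp
    ring
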